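/- Let p be a prime. The pair Z_p ≤ S_p (the cyclic group of order p generated by a p-cycle inside the symmetric group on p letters) has the homomorphism extension property: every homomorphism from the cyclic subgroup of order p to any symmetric group S_n extends to a homomorphism from S_p to S_n. -/

import Mathlib

open Equiv Equiv.Perm
open Fin.NatCast

private lemma stmt5_fix {β : Type} (σ : Equiv.Perm β) {p d : ℕ} (hp : p.Prime)
    (hσ : σ ^ p = 1) (hd0 : 0 < d) (hdp : d < p) {y : β} (hy : (σ ^ d) y = y) :
    σ y = y := by
  have hcop : Nat.Coprime p d := (Nat.Prime.coprime_iff_not_dvd hp).mpr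
    (fun h => absurd (Nat.le_of_dvd hd0 h) (not_le.mpr hdp))
  have hbez : (1 : ℤ) = p * Nat.gcdA p d + d * Nat.gcdB p d := by
    have := Nat.gcd_eq_gcd_ab p d
    rwa [hcop, Nat.cast_one] at this
  have h1 : σ = σ ^ ((p : ℤ) * Nat.gcdA p d + (d : ℤ) * Nat.gcdB p d) := by
    rw [← hbez]; simp
  rw [h1, zpow_add, zpow_mul, zpow_mul, Equiv.Perm.mul_apply]
  have h2 : ((σ ^ (d : ℤ)) ^ Nat.gcdB p d) y = y := by
    refine Equiv.Perm.zpow_apply_eq_self_of_apply_eq_self ?_ _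
    rw [zpow_natCast]; exact hy
  rw [h2]
  have h3 : (σ ^ (p : ℤ)) = 1 := by rw [zpow_natCast, hσ]
  rw [h3, one_zpow, Equiv.Perm.one_apply]

private lemma stmt5_key (p : ℕ) (hp : p.Prime) :
    ∀ (N : ℕ) (β : Type) [Fintype β] (σ : Equiv.Perm β), Fintype.card β ≤ N → σ ^ p = 1 →
      ∃ F : Equiv.Perm (Fin p) →* Equiv.Perm β, F (finRotate p) = σ := by
  obtain ⟨q, rfl⟩ : ∃ q, p = q + 1 := ⟨p - 1, (Nat.succ_pred_eq_of_pos hp.pos).symm⟩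
  intro N
  induction N with
  | zero =>
      intro β _ σ hcard _
      haveI hβ : IsEmpty β := Fintype.card_eq_zero_iff.mp (Nat.le_zero.mp hcard)
      exact ⟨1, Subsingleton.elim _ _⟩
  | succ N ih =>
      intro β _ σ hcard hσ
      classical
      by_cases h1 : σ = 1
      · exact ⟨1, by simp [h1]⟩
      obtain ⟨x₀, hx₀⟩ : ∃ x, σ x ≠ x := by
        by_contra h
        push_neg at h
        exact h1 (Equiv.ext fun x => h x)
      have hmod : ∀ a : ℕ, σ ^ (a % (q + 1)) = σ ^ a := by
        intro a
        conv_rhs => rw [← Nat.mod_add_div a (q + 1)]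
        rw [pow_add, pow_mul, hσ, one_pow, mul_one]
      set u : Fin (q + 1) → β := fun k => (σ ^ (k : ℕ)) x₀ with hu_def
      have haux : ∀ i j : Fin (q + 1), (i : ℕ) < (j : ℕ) → u i ≠ u j := by
        intro i j hij h
        have hd : (σ ^ ((j : ℕ) - (i : ℕ))) ((σ ^ (i : ℕ)) x₀) = (σ ^ (i : ℕ)) x₀ := by
          have : σ ^ (j : ℕ) = σ ^ ((j : ℕ) - (i : ℕ)) * σ ^ (i : ℕ) := by
            rw [← pow_add, Nat.sub_add_cancel hij.le]
          simp only [hu_def] at h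
          rw [this, Equiv.Perm.mul_apply] at h
          exact h.symm
        have hfix : σ ((σ ^ (i : ℕ)) x₀) = (σ ^ (i : ℕ)) x₀ :=
          stmt5_fix σ hp hσ (by omega) (by omega) hd
        have : (σ ^ (i : ℕ)) (σ x₀) = (σ ^ (i : ℕ)) x₀ := by
          have hcomm : σ ^ (i : ℕ) * σ = σ * σ ^ (i : ℕ) := (Commute.self_pow σ _).symm
          calc (σ ^ (i : ℕ)) (σ x₀) = (σ ^ (i : ℕ) * σ) x₀ := rfl
            _ = (σ * σ ^ (i : ℕ)) x₀ := by rw [hcomm]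
            _ = σ ((σ ^ (i : ℕ)) x₀) := rfl
            _ = (σ ^ (i : ℕ)) x₀ := hfix
        exact hx₀ ((σ ^ (i : ℕ)).injective this)
      have hu : Function.Injective u := by
        intro i j h
        by_contra hne
        rcases lt_trichotomy (i : ℕ) (j : ℕ) with hlt | heq | hgt
        · exact haux i j hlt h
        · exact hne (Fin.ext heq)
        · exact haux j i hgt h.symm
      set S : Set β := Set.range u with hS_def
      have hSmem : ∀ m : ℕ, (σ ^ m) x₀ ∈ S := by
        intro m
        refine ⟨⟨m % (q + 1), Nat.mod_lt _ hp.pos⟩, ?_⟩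
        simp only [hu_def]
        rw [hmod]
      have hS : ∀ y, y ∈ S ↔ σ y ∈ S := by
        intro y
        constructor
        · rintro ⟨k, rfl⟩
          have : σ (u k) = (σ ^ ((k : ℕ) + 1)) x₀ := by
            simp only [hu_def]
            rw [pow_succ', Equiv.Perm.mul_apply]
          rw [this]; exact hSmem _
        · rintro ⟨k, hk⟩
          have hy : y = (σ ^ ((q + 1) - 1)) (σ y) := by
            have : σ ^ ((q + 1) - 1) * σ = σ ^ (q + 1) := by
              rw [← pow_succ, Nat.sub_add_cancel hp.one_lt.le]
            calc y = (σ ^ (q + 1)) y := by rw [hσ]; rfl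
              _ = (σ ^ ((q + 1) - 1) * σ) y := by rw [this]
              _ = (σ ^ ((q + 1) - 1)) (σ y) := rfl
          rw [hy, ← hk]
          have : (σ ^ ((q + 1) - 1)) (u k) = (σ ^ (((q + 1) - 1) + (k : ℕ))) x₀ := by
            simp only [hu_def]
            rw [pow_add, Equiv.Perm.mul_apply]
          rw [this]; exact hSmem _
      have hSc : ∀ y, y ∈ Sᶜ ↔ σ y ∈ Sᶜ := fun y => not_iff_not.mpr (hS y)
      set σ' : Equiv.Perm {y // y ∈ Sᶜ} := σ.subtypePerm (fun y => (hSc y).symm) with hσ'_def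
      have hσ'P : σ' ^ (q + 1) = 1 := by
        rw [hσ'_def, Equiv.Perm.subtypePerm_pow]
        ext x
        simp [hσ]
      have hx₀S : x₀ ∈ S := by simpa using hSmem 0
      have hcard' : Fintype.card {y // y ∈ Sᶜ} ≤ N := by
        have h2 : Fintype.card {y // y ∈ Sᶜ} < Fintype.card β := by
          refine Fintype.card_lt_of_injective_of_notMem Subtype.val Subtype.val_injective
            (b := x₀) ?_
          intro h
          obtain ⟨z, hz⟩ := h
          rw [← hz] at hx₀S
          exact z.2 hx₀S
        omega
      obtain ⟨f', hf'⟩ := ih {y // y ∈ Sᶜ} σ' hcard' hσ'P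
      set e : Fin (q + 1) ≃ S := Equiv.ofInjective u hu with he_def
      have hcomm : ∀ τ₁ τ₂ : Equiv.Perm (Fin (q + 1)),
          Commute (τ₁.extendDomain e) (Equiv.Perm.ofSubtype (f' τ₂)) := by
        intro τ₁ τ₂
        apply Equiv.Perm.Disjoint.commute
        intro y
        by_cases hy : y ∈ S
        · right
          exact Equiv.Perm.ofSubtype_apply_of_not_mem _ (by simpa using hy)
        · left
          exact Equiv.Perm.extendDomain_apply_not_subtype _ _ hy
      refine ⟨{ toFun := fun τ => τ.extendDomain e * Equiv.Perm.ofSubtype (f' τ),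
                map_one' := by simp [Equiv.Perm.extendDomain_one], map_mul' := ?_ }, ?_⟩
      · intro τ₁ τ₂
        show (τ₁ * τ₂).extendDomain e * Equiv.Perm.ofSubtype (f' (τ₁ * τ₂)) =
          (τ₁.extendDomain e * Equiv.Perm.ofSubtype (f' τ₁)) *
            (τ₂.extendDomain e * Equiv.Perm.ofSubtype (f' τ₂))
        rw [← Equiv.Perm.extendDomain_mul, map_mul, map_mul, (hcomm τ₂ τ₁).mul_mul_mul_comm]
      · show (finRotate (q + 1)).extendDomain e * Equiv.Perm.ofSubtype (f' (finRotate (q + 1))) = σ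
        ext y
        by_cases hy : y ∈ S
        · obtain ⟨k, rfl⟩ := hy
          rw [Equiv.Perm.mul_apply]
          have h2 : Equiv.Perm.ofSubtype (f' (finRotate (q + 1))) (u k) = u k :=
            Equiv.Perm.ofSubtype_apply_of_not_mem _ (fun h => h ⟨k, rfl⟩)
          rw [h2]
          have h3 : u k = e k := rfl
          rw [h3, Equiv.Perm.extendDomain_apply_image]
          have h4 : (e (finRotate (q + 1) k) : β) = u (finRotate (q + 1) k) := rfl
          rw [h4]
          simp only [hu_def, finRotate_succ_apply]
          have h5 : (((k + 1 : Fin (q + 1))) : ℕ) = ((k : ℕ) + 1 % (q + 1)) % (q + 1) := by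
            rw [Fin.add_def]
            simp [Fin.val_one']
          rw [h5]
          have h6 : 1 % (q + 1) = 1 := Nat.mod_eq_of_lt hp.one_lt
          rw [h6, hmod, pow_succ', Equiv.Perm.mul_apply, ← h3]
        · rw [Equiv.Perm.mul_apply]
          have h2 : Equiv.Perm.ofSubtype (f' (finRotate (q + 1))) y = σ y := by
            rw [hf', Equiv.Perm.ofSubtype_apply_of_mem _ (by simpa using hy)]
            rfl
          rw [h2]
          exact Equiv.Perm.extendDomain_apply_not_subtype _ _ (fun h => hy ((hS y).mpr h))

/-- Let `p` be a prime. The pair `Z_p ≤ S_p`, where `Z_p` is the cyclic subgroup of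
order `p` generated by a `p`-cycle, has the homomorphism extension property: every
homomorphism from this cyclic subgroup to any symmetric group `S_n` extends to a
homomorphism `S_p → S_n`. -/
theorem stmt_5 (p : ℕ) (hp : p.Prime) (n : ℕ)
    (φ : (Subgroup.zpowers (finRotate p)) →* Equiv.Perm (Fin n)) :
    ∃ φbar : Equiv.Perm (Fin p) →* Equiv.Perm (Fin n),
      ∀ h : Subgroup.zpowers (finRotate p), φbar (h : Equiv.Perm (Fin p)) = φ h := by
  set g : Subgroup.zpowers (finRotate p) := ⟨finRotate p, Subgroup.mem_zpowers _⟩ with hg_def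
  set σ : Equiv.Perm (Fin n) := φ g with hσ_def
  have hgp : g ^ p = 1 := by
    have hfr : (finRotate p) ^ p = 1 := by
      obtain ⟨p', rfl⟩ : ∃ p', p = p' + 1 := ⟨p - 1, (Nat.succ_pred_eq_of_pos hp.pos).symm⟩
      have key : ∀ m : ℕ, ∀ i : Fin (p' + 1),
          ((finRotate (p' + 1)) ^ m) i = i + (m : Fin (p' + 1)) := by
        intro m
        induction m with
        | zero => intro i; simp
        | succ m ih =>
            intro i
            rw [pow_succ, Equiv.Perm.mul_apply, finRotate_succ_apply, ih]
            push_cast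
            abel
      ext i
      rw [key]
      simp
    exact Subtype.ext (by push_cast; exact hfr)
  have hσp : σ ^ p = 1 := by
    rw [hσ_def, ← map_pow, hgp, map_one]
  obtain ⟨F, hF⟩ := stmt5_key p hp (Fintype.card (Fin n)) (Fin n) σ le_rfl hσp
  refine ⟨F, ?_⟩
  intro h
  obtain ⟨m, hm⟩ := Subgroup.mem_zpowers_iff.mp h.2
  have hh : h = g ^ m := Subtype.ext (by push_cast; exact hm.symm)
  have hcoe : ((g ^ m : Subgroup.zpowers (finRotate p)) : Equiv.Perm (Fin p)) =
      (finRotate p) ^ m := by push_cast; rfl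
  rw [hh, hcoe, map_zpow, hF, map_zpow]
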